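/- Let 0 < α < 2 be real, let γ ∈ ℤ² be nonzero, and let c : ℤ² → ℂ be such that c(k) = 0 whenever ⟨k,γ⟩ ≠ 0, and such that for every N ∈ ℕ there exists C_N > 0 with |c(k)| ≤ C_N·(1 + ‖k‖)^{−N} for all k ∈ ℤ². Then the sums S_n := ∑_{k ∈ ℤ²} |c(k)|²·( ‖n·γ + k‖^α − n^α·‖γ‖^α )² are finite and S_n → 0 as n → ∞. -/

import Mathlib

noncomputable def latticeToEuclidean2 (k : Fin 2 → ℤ) : EuclideanSpace ℝ (Fin 2) :=
  WithLp.toLp 2 (fun i => (k i : ℝ))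

open Real Filter

lemma aux_sq_rpow_half (x p : ℝ) (hx : 0 ≤ x) : (x ^ 2) ^ (p / 2) = x ^ p := by
  rw [← Real.rpow_natCast x 2, ← Real.rpow_mul hx]
  congr 1
  ring

lemma aux_rpow_add_le {a b s : ℝ} (ha : 0 ≤ a) (hb : 0 ≤ b) (hs0 : 0 ≤ s) (hs1 : s ≤ 1) :
    (a + b) ^ s ≤ a ^ s + b ^ s := by
  have h := NNReal.rpow_add_le_add_rpow a.toNNReal b.toNNReal hs0 hs1
  rw [← Real.toNNReal_add ha hb] at h
  have h2 := NNReal.coe_le_coe.2 h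
  rw [NNReal.coe_add, NNReal.coe_rpow, NNReal.coe_rpow, NNReal.coe_rpow,
    Real.coe_toNNReal _ ha, Real.coe_toNNReal _ hb,
    Real.coe_toNNReal _ (add_nonneg ha hb)] at h2
  exact h2

lemma aux_bernoulli {a b s : ℝ} (ha : 0 < a) (hb : 0 ≤ b) (hs0 : 0 ≤ s) (hs1 : s ≤ 1) :
    (a + b) ^ s ≤ a ^ s + s * b * a ^ (s - 1) := by
  have h1 : (0:ℝ) ≤ 1 + b / a := by positivity
  have hbern : (1 + b / a) ^ s ≤ 1 + s * (b / a) :=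
    rpow_one_add_le_one_add_mul_self (by have := div_nonneg hb ha.le; linarith) hs0 hs1
  have heq : (a + b) ^ s = a ^ s * (1 + b / a) ^ s := by
    rw [← Real.mul_rpow ha.le h1]
    congr 1
    field_simp
  rw [heq]
  calc a ^ s * (1 + b / a) ^ s ≤ a ^ s * (1 + s * (b / a)) :=
        mul_le_mul_of_nonneg_left hbern (Real.rpow_nonneg ha.le s)
    _ = a ^ s + s * b * a ^ (s - 1) := by
        rw [Real.rpow_sub ha, Real.rpow_one]
        field_simp

lemma aux_coord_le_norm (k : Fin 2 → ℤ) (i : Fin 2) :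
    |(k i : ℝ)| ≤ ‖latticeToEuclidean2 k‖ := by
  have h : ‖latticeToEuclidean2 k‖ = Real.sqrt (∑ j, ‖latticeToEuclidean2 k j‖ ^ 2) :=
    EuclideanSpace.norm_eq _
  rw [h]
  have : |(k i : ℝ)| = Real.sqrt (‖latticeToEuclidean2 k i‖ ^ 2) := by
    rw [Real.sqrt_sq_eq_abs]
    simp [latticeToEuclidean2]
  rw [this]
  exact Real.sqrt_le_sqrt (Finset.single_le_sum
    (f := fun j => ‖latticeToEuclidean2 k j‖ ^ 2) (fun j _ => sq_nonneg _) (Finset.mem_univ i))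

lemma aux_norm_le (k : Fin 2 → ℤ) : ‖k‖ ≤ ‖latticeToEuclidean2 k‖ := by
  rw [pi_norm_le_iff_of_nonneg (norm_nonneg _)]
  intro i
  rw [Int.norm_eq_abs]
  have := aux_coord_le_norm k i
  exact_mod_cast this

lemma aux_map_add (n : ℕ) (γ k : Fin 2 → ℤ) :
    latticeToEuclidean2 ((n : ℤ) • γ + k)
      = (n : ℝ) • latticeToEuclidean2 γ + latticeToEuclidean2 k := by
  ext i
  simp only [latticeToEuclidean2, Pi.add_apply, Pi.smul_apply, smul_eq_mul,
    PiLp.add_apply, PiLp.smul_apply, PiLp.toLp_apply]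
  push_cast
  ring

lemma aux_normsq_eq (x : EuclideanSpace ℝ (Fin 2)) : ‖x‖ ^ 2 = x 0 ^ 2 + x 1 ^ 2 := by
  rw [EuclideanSpace.norm_eq, Real.sq_sqrt (by positivity)]
  simp [Fin.sum_univ_two, Real.norm_eq_abs, sq_abs]

lemma aux_norm_sq (γ k : Fin 2 → ℤ) (h : (∑ i, k i * γ i) = 0) (n : ℕ) :
    ‖latticeToEuclidean2 ((n : ℤ) • γ + k)‖ ^ 2
      = ((n : ℝ) * ‖latticeToEuclidean2 γ‖) ^ 2 + ‖latticeToEuclidean2 k‖ ^ 2 := by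
  have horth : (k 0 : ℝ) * (γ 0 : ℝ) + (k 1 : ℝ) * (γ 1 : ℝ) = 0 := by
    have h' : ((∑ i, k i * γ i : ℤ) : ℝ) = 0 := by rw [h]; simp
    push_cast [Fin.sum_univ_two] at h'
    linarith
  have hG2 : ‖latticeToEuclidean2 γ‖ ^ 2 = (γ 0 : ℝ) ^ 2 + (γ 1 : ℝ) ^ 2 := by
    rw [aux_normsq_eq]; simp [latticeToEuclidean2]
  have hK2 : ‖latticeToEuclidean2 k‖ ^ 2 = (k 0 : ℝ) ^ 2 + (k 1 : ℝ) ^ 2 := by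
    rw [aux_normsq_eq]; simp [latticeToEuclidean2]
  rw [aux_normsq_eq (latticeToEuclidean2 ((n : ℤ) • γ + k)), mul_pow, hG2, hK2]
  simp only [latticeToEuclidean2, Pi.add_apply, Pi.smul_apply, smul_eq_mul, PiLp.toLp_apply]
  push_cast
  linear_combination (2 * (n : ℝ)) * horth

/-- **Quasimode estimate for the fractional Schrödinger equation.** If
`c : ℤ² → ℂ` is rapidly decaying and supported in `γ^⊥` for a nonzero `γ ∈ ℤ²`,
then for `0 < α < 2` the sums
`S_n = ∑_k |c(k)|²(‖nγ+k‖^α − n^α‖γ‖^α)²` are finite and tend to `0`. -/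
theorem quasimode_sums_tendsto_zero
    (α : ℝ) (hα0 : 0 < α) (hα2 : α < 2)
    (γ : Fin 2 → ℤ) (hγ : γ ≠ 0)
    (c : (Fin 2 → ℤ) → ℂ)
    (hsupp : ∀ k : Fin 2 → ℤ, (∑ i, k i * γ i) ≠ 0 → c k = 0)
    (hdecay : ∀ N : ℕ, ∃ C : ℝ, 0 < C ∧ ∀ k : Fin 2 → ℤ,
      ‖c k‖ ≤ C * (1 + ‖latticeToEuclidean2 k‖) ^ (-(N : ℝ))) :
    (∀ n : ℕ, Summable fun k : Fin 2 → ℤ =>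
      ‖c k‖ ^ 2 *
        (‖latticeToEuclidean2 ((n : ℤ) • γ + k)‖ ^ α
          - (n : ℝ) ^ α * ‖latticeToEuclidean2 γ‖ ^ α) ^ 2) ∧
    Filter.Tendsto (fun n : ℕ => ∑' k : Fin 2 → ℤ,
      ‖c k‖ ^ 2 *
        (‖latticeToEuclidean2 ((n : ℤ) • γ + k)‖ ^ α
          - (n : ℝ) ^ α * ‖latticeToEuclidean2 γ‖ ^ α) ^ 2)
      Filter.atTop (nhds 0) := by
  have hGpos : 0 < ‖latticeToEuclidean2 γ‖ := by
    rw [norm_pos_iff]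
    intro h0
    apply hγ
    funext i
    have := congrArg (fun x : EuclideanSpace ℝ (Fin 2) => x i) h0
    simpa [latticeToEuclidean2] using this
  set G : ℝ := ‖latticeToEuclidean2 γ‖ with hGdef
  have hs0 : (0:ℝ) ≤ α / 2 := by positivity
  have hs1 : α / 2 ≤ 1 := by linarith
  -- rewrite of the difference for orthogonal k
  have hdiff : ∀ (n : ℕ) (k : Fin 2 → ℤ), (∑ i, k i * γ i) = 0 →
      ‖latticeToEuclidean2 ((n : ℤ) • γ + k)‖ ^ α - (n : ℝ) ^ α * G ^ α
        = (((n : ℝ) * G) ^ 2 + ‖latticeToEuclidean2 k‖ ^ 2) ^ (α / 2)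
          - (((n : ℝ) * G) ^ 2) ^ (α / 2) := by
    intro n k hk
    have h1 : ‖latticeToEuclidean2 ((n:ℤ) • γ + k)‖ ^ α
        = (((n:ℝ) * G) ^ 2 + ‖latticeToEuclidean2 k‖ ^ 2) ^ (α / 2) := by
      rw [← aux_norm_sq γ k hk n, aux_sq_rpow_half _ _ (norm_nonneg _)]
    have h2 : (n:ℝ) ^ α * G ^ α = (((n:ℝ) * G) ^ 2) ^ (α / 2) := by
      rw [aux_sq_rpow_half _ _ (by positivity),
        Real.mul_rpow (Nat.cast_nonneg n) hGpos.le]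
    rw [h1, h2]
  obtain ⟨C, hCpos, hC⟩ := hdecay 4
  -- the dominating function
  set bound : (Fin 2 → ℤ) → ℝ := fun k =>
    C ^ 2 * ‖k‖ ^ (-(4:ℝ)) + (if k = 0 then C ^ 2 else 0) with hbdef
  have hbound_nonneg : ∀ k, 0 ≤ bound k := by
    intro k
    apply add_nonneg
    · positivity
    · split <;> positivity
  have hbound_sum : Summable bound := by
    apply Summable.add
    · exact (EisensteinSeries.summable_one_div_norm_rpow (by norm_num)).mul_left _
    · apply summable_of_ne_finset_zero (s := {(0 : Fin 2 → ℤ)})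
      intro k hk
      simp only [Finset.mem_singleton] at hk
      simp [hk]
  -- the key uniform bound
  have hFle : ∀ (n : ℕ) (k : Fin 2 → ℤ),
      ‖c k‖ ^ 2 *
        (‖latticeToEuclidean2 ((n : ℤ) • γ + k)‖ ^ α - (n : ℝ) ^ α * G ^ α) ^ 2
        ≤ bound k := by
    intro n k
    by_cases hck : c k = 0
    · simpa [hck] using hbound_nonneg k
    · have hk0 : (∑ i, k i * γ i) = 0 := by
        by_contra h
        exact hck (hsupp k h)
      set t : ℝ := 1 + ‖latticeToEuclidean2 k‖ with htdef
      have ht1 : (1:ℝ) ≤ t := by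
        rw [htdef]
        have := norm_nonneg (latticeToEuclidean2 k)
        linarith
      have ht0 : (0:ℝ) < t := lt_of_lt_of_le one_pos ht1
      have ha0 : (0:ℝ) ≤ ((n:ℝ) * G) ^ 2 := sq_nonneg _
      have hb0 : (0:ℝ) ≤ ‖latticeToEuclidean2 k‖ ^ 2 := sq_nonneg _
      have hdnn : 0 ≤ (((n:ℝ) * G) ^ 2 + ‖latticeToEuclidean2 k‖ ^ 2) ^ (α / 2)
          - (((n:ℝ) * G) ^ 2) ^ (α / 2) := by
        apply sub_nonneg.2
        exact Real.rpow_le_rpow ha0 (by linarith) hs0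
      have hdle : (((n:ℝ) * G) ^ 2 + ‖latticeToEuclidean2 k‖ ^ 2) ^ (α / 2)
          - (((n:ℝ) * G) ^ 2) ^ (α / 2) ≤ t ^ (2:ℝ) := by
        have h1 := aux_rpow_add_le ha0 hb0 hs0 hs1
        have h2 : (‖latticeToEuclidean2 k‖ ^ 2) ^ (α / 2) = ‖latticeToEuclidean2 k‖ ^ α :=
          aux_sq_rpow_half _ _ (norm_nonneg _)
        have h3 : ‖latticeToEuclidean2 k‖ ^ α ≤ t ^ α := by
          apply Real.rpow_le_rpow (norm_nonneg _) _ hα0.le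
          rw [htdef]; linarith
        have h4 : t ^ α ≤ t ^ (2:ℝ) := Real.rpow_le_rpow_of_exponent_le ht1 hα2.le
        linarith
      have hsq : (‖latticeToEuclidean2 ((n : ℤ) • γ + k)‖ ^ α - (n : ℝ) ^ α * G ^ α) ^ 2
          ≤ (t ^ (2:ℝ)) ^ 2 := by
        rw [hdiff n k hk0]
        apply sq_le_sq'
        · have h0 : (0:ℝ) ≤ t ^ (2:ℝ) := Real.rpow_nonneg ht0.le 2
          exact (neg_nonpos.2 h0).trans hdnn
        · exact hdle
      have hcle : ‖c k‖ ^ 2 ≤ (C * t ^ (-(4:ℝ))) ^ 2 := by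
        apply pow_le_pow_left₀ (norm_nonneg _)
        have := hC k
        simpa [htdef] using this
      have hmul : ‖c k‖ ^ 2 *
          (‖latticeToEuclidean2 ((n : ℤ) • γ + k)‖ ^ α - (n : ℝ) ^ α * G ^ α) ^ 2
          ≤ (C * t ^ (-(4:ℝ))) ^ 2 * (t ^ (2:ℝ)) ^ 2 :=
        mul_le_mul hcle hsq (sq_nonneg _) (by positivity)
      have hidentity : (C * t ^ (-(4:ℝ))) ^ 2 * (t ^ (2:ℝ)) ^ 2 = C ^ 2 * t ^ (-(4:ℝ)) := by
        rw [mul_pow, ← Real.rpow_natCast (t ^ (-(4:ℝ))) 2, ← Real.rpow_natCast (t ^ (2:ℝ)) 2,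
          ← Real.rpow_mul ht0.le, ← Real.rpow_mul ht0.le, mul_assoc, ← Real.rpow_add ht0]
        norm_num
      rw [hidentity] at hmul
      refine hmul.trans ?_
      by_cases hk : k = 0
      · subst hk
        have ht : t = 1 := by
          rw [htdef]
          have : latticeToEuclidean2 0 = 0 := by
            ext i; simp [latticeToEuclidean2]
          simp [this]
        have hz : ‖(0 : Fin 2 → ℤ)‖ ^ (-(4:ℝ)) = 0 := by
          rw [norm_zero, Real.zero_rpow (by norm_num)]
        rw [ht, Real.one_rpow, hbdef]
        simp [hz]
      · have hknorm : (0:ℝ) < ‖k‖ := norm_pos_iff.2 hk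
        have hkt : ‖k‖ ≤ t := by
          rw [htdef]
          have := aux_norm_le k
          linarith
        have h5 : t ^ (-(4:ℝ)) ≤ ‖k‖ ^ (-(4:ℝ)) :=
          Real.rpow_le_rpow_of_nonpos hknorm hkt (by norm_num)
        rw [hbdef]
        simp only [if_neg hk, add_zero]
        exact mul_le_mul_of_nonneg_left h5 (by positivity)
  constructor
  · intro n
    apply Summable.of_nonneg_of_le (fun k => by positivity) (hFle n) hbound_sum
  · -- pointwise limits
    have hab : ∀ k : Fin 2 → ℤ, Tendsto (fun n : ℕ =>
        ‖c k‖ ^ 2 *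
          (‖latticeToEuclidean2 ((n : ℤ) • γ + k)‖ ^ α - (n : ℝ) ^ α * G ^ α) ^ 2)
        atTop (nhds 0) := by
      intro k
      by_cases hck : c k = 0
      · simp only [hck, map_zero, norm_zero, ne_eq, OfNat.ofNat_ne_zero, not_false_eq_true, zero_pow,
          zero_mul]
        exact tendsto_const_nhds
      · have hk0 : (∑ i, k i * γ i) = 0 := by
          by_contra h
          exact hck (hsupp k h)
        have hd : Tendsto (fun n : ℕ =>
            (((n:ℝ) * G) ^ 2 + ‖latticeToEuclidean2 k‖ ^ 2) ^ (α / 2)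
              - (((n:ℝ) * G) ^ 2) ^ (α / 2)) atTop (nhds 0) := by
          have hupper : Tendsto (fun n : ℕ =>
              (α / 2) * ‖latticeToEuclidean2 k‖ ^ 2 * ((n:ℝ) * G) ^ (α - 2))
              atTop (nhds 0) := by
            have h1 : Tendsto (fun n : ℕ => (n:ℝ) * G) atTop atTop :=
              Tendsto.atTop_mul_const hGpos tendsto_natCast_atTop_atTop
            have h2 : Tendsto (fun n : ℕ => ((n:ℝ) * G) ^ (α - 2)) atTop (nhds 0) := by
              have h3 := (tendsto_rpow_neg_atTop (by linarith : (0:ℝ) < 2 - α)).comp h1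
              have : (fun n : ℕ => ((n:ℝ) * G) ^ (α - 2))
                  = fun n : ℕ => ((n:ℝ) * G) ^ (-(2 - α)) := by
                funext n; congr 1; ring
              rw [this]
              exact h3
            have := h2.const_mul ((α / 2) * ‖latticeToEuclidean2 k‖ ^ 2)
            simpa using this
          apply squeeze_zero' (Eventually.of_forall fun n => ?_)
            (eventually_atTop.2 ⟨1, fun n hn => ?_⟩) hupper
          · exact sub_nonneg.2 (Real.rpow_le_rpow (sq_nonneg _)
              (by nlinarith [sq_nonneg (‖latticeToEuclidean2 k‖)]) hs0)
          · have hnpos : (0:ℝ) < ((n:ℝ) * G) ^ 2 := by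
              have : (1:ℝ) ≤ (n:ℝ) := by exact_mod_cast hn
              positivity
            have hb := aux_bernoulli hnpos (sq_nonneg (‖latticeToEuclidean2 k‖)) hs0 hs1
            have hrw : (((n:ℝ) * G) ^ 2) ^ (α / 2 - 1) = ((n:ℝ) * G) ^ (α - 2) := by
              rw [← Real.rpow_natCast ((n:ℝ) * G) 2, ← Real.rpow_mul (by positivity)]
              congr 1
              ring
            rw [hrw] at hb
            linarith
        have h6 := hd.pow 2
        have h7 := h6.const_mul (‖c k‖ ^ 2)
        simp only [ne_eq, OfNat.ofNat_ne_zero, not_false_eq_true, zero_pow, mul_zero] at h7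
        apply h7.congr
        intro n
        rw [hdiff n k hk0]
    have hmain := tendsto_tsum_of_dominated_convergence (f := fun (n : ℕ) (k : Fin 2 → ℤ) =>
        ‖c k‖ ^ 2 *
          (‖latticeToEuclidean2 ((n : ℤ) • γ + k)‖ ^ α - (n : ℝ) ^ α * G ^ α) ^ 2)
        (g := fun _ => (0:ℝ)) hbound_sum hab
        (Eventually.of_forall fun n k => by
          rw [Real.norm_of_nonneg (by positivity)]
          exact hFle n k)
    simpa [tsum_zero] using hmain
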